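/- For every ε > 0 and every r ∈ (0,1], |p^ε(r)| ≤ M, where M = sup_{s ∈ [0,1]} V(s); in particular the family {u^ε}_{ε>0} is uniformly Lipschitz on [0,1] with Lipschitz constant M. -/

import Mathlib

open Filter Set Real

/-- For every `ε > 0` and every `r ∈ (0,1]`, `|p^ε(r)| ≤ M`, where
`M = sup_{s ∈ [0,1]} V(s)`; in particular the family `{u^ε}` is uniformly Lipschitz
on `[0,1]` with Lipschitz constant `M`. -/
theorem eikonal_p_eps_bounded_u_eps_lipschitz
    (n : ℕ) (hn : 1 ≤ n) (V : ℝ → ℝ)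
    (hV0 : ∀ s ∈ Set.Icc (0:ℝ) 1, 0 ≤ V s)
    (hVb : ∃ M' : ℝ, ∀ s ∈ Set.Icc (0:ℝ) 1, |V s| ≤ M')
    (hVlip : ∃ K : NNReal, LipschitzOnWith K V (Set.Icc 0 1))
    (M : ℝ) (hM : IsLUB (V '' Set.Icc 0 1) M)
    (p : ℝ → ℝ → ℝ)
    (hp : ∀ ε r : ℝ, p ε r =
      -(1/ε) * (r ^ (n-1))⁻¹ * Real.exp (-r/ε) *
        ∫ s in (0:ℝ)..r, s ^ (n-1) * Real.exp (s/ε) * V s) :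
    (∀ ε : ℝ, 0 < ε → ∀ r ∈ Set.Ioc (0:ℝ) 1, |p ε r| ≤ M) ∧
      (∀ ε : ℝ, 0 < ε → ∀ x ∈ Set.Icc (0:ℝ) 1, ∀ y ∈ Set.Icc (0:ℝ) 1,
        |(∫ s in x..(1:ℝ), -p ε s) - ∫ s in y..(1:ℝ), -p ε s| ≤ M * |x - y|) := by
  obtain ⟨K, hK⟩ := hVlip
  have hVcont : ContinuousOn V (Set.Icc 0 1) := hK.continuousOn
  have hVleM : ∀ s ∈ Set.Icc (0:ℝ) 1, V s ≤ M := fun s hs => hM.1 ⟨s, hs, rfl⟩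
  have hM0 : 0 ≤ M := le_trans (hV0 0 (by norm_num)) (hVleM 0 (by norm_num))
  -- continuity of the integrand on [0,1], for a fixed ε
  have hfc : ∀ ε : ℝ, ContinuousOn (fun s : ℝ => s ^ (n-1) * Real.exp (s/ε) * V s)
      (Set.Icc 0 1) := by
    intro ε
    exact (((continuous_pow (n-1)).continuousOn).mul
      ((Real.continuous_exp.comp (continuous_id.div_const ε)).continuousOn)).mul hVcont
  -- the main bound
  have hbound : ∀ ε : ℝ, 0 < ε → ∀ r ∈ Set.Ioc (0:ℝ) 1, |p ε r| ≤ M := by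
    intro ε hε r hr
    obtain ⟨hr0, hr1⟩ := hr
    set f : ℝ → ℝ := fun s => s ^ (n-1) * Real.exp (s/ε) * V s with hf
    have hfcr : ContinuousOn f (Set.Icc 0 r) :=
      (hfc ε).mono (Set.Icc_subset_Icc le_rfl hr1)
    have hfi : IntervalIntegrable f MeasureTheory.volume 0 r :=
      hfcr.intervalIntegrable_of_Icc hr0.le
    set g : ℝ → ℝ := fun s => M * r ^ (n-1) * Real.exp (s/ε) with hg
    have hgi : IntervalIntegrable g MeasureTheory.volume 0 r := by
      apply Continuous.intervalIntegrable
      exact continuous_const.mul (Real.continuous_exp.comp (continuous_id.div_const ε))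
    -- pointwise bound |f s| ≤ g s on [0, r]
    have hfg : ∀ s ∈ Set.Icc (0:ℝ) r, |f s| ≤ g s := by
      intro s hs
      have hs01 : s ∈ Set.Icc (0:ℝ) 1 := ⟨hs.1, hs.2.trans hr1⟩
      have h1 : |f s| = s ^ (n-1) * Real.exp (s/ε) * |V s| := by
        rw [abs_mul, abs_mul, abs_of_nonneg (pow_nonneg hs.1 _),
          abs_of_nonneg (Real.exp_pos _).le]
      rw [h1]
      have hVs : |V s| ≤ M := by
        rw [abs_of_nonneg (hV0 s hs01)]; exact hVleM s hs01
      have hsr : s ^ (n-1) ≤ r ^ (n-1) := pow_le_pow_left₀ hs.1 hs.2 _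
      calc s ^ (n-1) * Real.exp (s/ε) * |V s|
          ≤ r ^ (n-1) * Real.exp (s/ε) * M := by
            apply mul_le_mul _ hVs (abs_nonneg _)
            · positivity
            · exact mul_le_mul_of_nonneg_right hsr (Real.exp_pos _).le
        _ = g s := by ring
    have hIb : |∫ s in (0:ℝ)..r, f s| ≤ ∫ s in (0:ℝ)..r, g s := by
      calc |∫ s in (0:ℝ)..r, f s| ≤ ∫ s in (0:ℝ)..r, |f s| :=
            intervalIntegral.abs_integral_le_integral_abs hr0.le
        _ ≤ ∫ s in (0:ℝ)..r, g s := by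
            apply intervalIntegral.integral_mono_on hr0.le hfi.abs hgi hfg
    -- compute ∫ g
    have hgval : (∫ s in (0:ℝ)..r, g s) = M * r ^ (n-1) * (ε * (Real.exp (r/ε) - 1)) := by
      have hprim : ∀ s ∈ Set.uIcc (0:ℝ) r, HasDerivAt (fun t => ε * Real.exp (t/ε))
          (Real.exp (s/ε)) s := by
        intro s _
        have h1 : HasDerivAt (fun t : ℝ => t/ε) (1/ε) s := by
          simpa using (hasDerivAt_id s).div_const ε
        have h2 : HasDerivAt (fun t : ℝ => Real.exp (t/ε)) (Real.exp (s/ε) * (1/ε)) s :=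
          h1.exp
        have h3 := h2.const_mul ε
        refine h3.congr_deriv ?_
        rw [one_div, mul_comm, mul_assoc, inv_mul_cancel₀ hε.ne', mul_one]
      have hderivint : IntervalIntegrable (fun s => Real.exp (s/ε))
          MeasureTheory.volume 0 r := by
        apply Continuous.intervalIntegrable
        exact Real.continuous_exp.comp (continuous_id.div_const ε)
      have h4 := intervalIntegral.integral_eq_sub_of_hasDerivAt hprim hderivint
      have h5 : (∫ s in (0:ℝ)..r, g s) = M * r ^ (n-1) * ∫ s in (0:ℝ)..r, Real.exp (s/ε) :=
        intervalIntegral.integral_const_mul _ _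
      rw [h5, h4, zero_div, Real.exp_zero]
      ring
    -- put things together
    have hc : (0:ℝ) < r ^ (n-1) := pow_pos hr0 _
    have hE : (0:ℝ) < Real.exp (r/ε) := Real.exp_pos _
    have hE1 : (1:ℝ) ≤ Real.exp (r/ε) := by
      rw [show (1:ℝ) = Real.exp 0 by simp]
      exact Real.exp_le_exp.mpr (by positivity)
    have habs : |p ε r| = (1/ε) * (r ^ (n-1))⁻¹ * Real.exp (-r/ε) *
        |∫ s in (0:ℝ)..r, f s| := by
      rw [hp ε r, abs_mul, abs_mul, abs_mul]
      rw [abs_of_nonpos (neg_nonpos.mpr (by positivity : (0:ℝ) ≤ 1/ε)), neg_neg,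
        abs_of_nonneg (by positivity : (0:ℝ) ≤ ((r:ℝ) ^ (n-1))⁻¹),
        abs_of_nonneg (Real.exp_pos _).le]
    rw [habs]
    have hcoef : (0:ℝ) ≤ (1/ε) * (r ^ (n-1))⁻¹ * Real.exp (-r/ε) := by positivity
    calc (1/ε) * (r ^ (n-1))⁻¹ * Real.exp (-r/ε) * |∫ s in (0:ℝ)..r, f s|
        ≤ (1/ε) * (r ^ (n-1))⁻¹ * Real.exp (-r/ε) *
          (M * r ^ (n-1) * (ε * (Real.exp (r/ε) - 1))) := by
          apply mul_le_mul_of_nonneg_left _ hcoef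
          rw [← hgval]; exact hIb
      _ = M * (1 - Real.exp (-r/ε)) := by
          rw [neg_div, Real.exp_neg]
          field_simp
      _ ≤ M := by
        have : (0:ℝ) ≤ Real.exp (-r/ε) := (Real.exp_pos _).le
        nlinarith
  refine ⟨hbound, ?_⟩
  -- the Lipschitz part
  intro ε hε x hx y hy
  -- p ε is continuous on (0,1]
  have hFc : ContinuousOn (fun r : ℝ => ∫ s in (0:ℝ)..r,
      s ^ (n-1) * Real.exp (s/ε) * V s) (Set.Icc 0 1) := by
    have h1 : MeasureTheory.IntegrableOn (fun s : ℝ => s ^ (n-1) * Real.exp (s/ε) * V s)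
        (Set.uIcc (0:ℝ) 1) MeasureTheory.volume := by
      rw [Set.uIcc_of_le (zero_le_one' ℝ)]
      exact (hfc ε).integrableOn_Icc
    have := intervalIntegral.continuousOn_primitive_interval h1
    rwa [Set.uIcc_of_le (zero_le_one' ℝ)] at this
  have hpc : ContinuousOn (p ε) (Set.Ioc 0 1) := by
    apply ContinuousOn.congr (f := fun r : ℝ => -(1/ε) * (r ^ (n-1))⁻¹ * Real.exp (-r/ε) *
        ∫ s in (0:ℝ)..r, s ^ (n-1) * Real.exp (s/ε) * V s)
    · apply ContinuousOn.mul
      · apply ContinuousOn.mul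
        · apply ContinuousOn.mul continuousOn_const
          exact ContinuousOn.inv₀ (continuous_pow (n-1)).continuousOn
            (fun r hr => pow_ne_zero _ (ne_of_gt hr.1))
        · exact (Real.continuous_exp.comp (continuous_id.neg.div_const ε)).continuousOn
      · exact hFc.mono Set.Ioc_subset_Icc_self
    · intro r _; exact hp ε r
  -- p ε is interval integrable on [0,1]
  have hpmeas : MeasureTheory.AEStronglyMeasurable (p ε)
      (MeasureTheory.volume.restrict (Set.Ioc (0:ℝ) 1)) :=
    hpc.aestronglyMeasurable measurableSet_Ioc
  have hpint : IntervalIntegrable (p ε) MeasureTheory.volume 0 1 := by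
    rw [intervalIntegrable_iff_integrableOn_Ioc_of_le (zero_le_one' ℝ)]
    refine ⟨hpmeas, ?_⟩
    apply MeasureTheory.HasFiniteIntegral.restrict_of_bounded (C := M)
    · exact measure_Ioc_lt_top
    · rw [MeasureTheory.ae_restrict_iff' measurableSet_Ioc]
      filter_upwards with s hs
      simpa using hbound ε hε s hs
  have hsub : ∀ a ∈ Set.Icc (0:ℝ) 1, ∀ b ∈ Set.Icc (0:ℝ) 1,
      IntervalIntegrable (fun s => -p ε s) MeasureTheory.volume a b := by
    intro a ha b hb
    apply IntervalIntegrable.mono_set hpint.neg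
    rw [Set.uIcc_of_le (zero_le_one' ℝ)]
    exact Set.uIcc_subset_Icc ha hb
  have hadd := intervalIntegral.integral_add_adjacent_intervals
    (hsub x hx y hy) (hsub y hy 1 (by norm_num))
  have hdiff : (∫ s in x..(1:ℝ), -p ε s) - ∫ s in y..(1:ℝ), -p ε s
      = ∫ s in x..y, -p ε s := by linarith
  rw [hdiff]
  have hxy : ∀ s ∈ Set.uIoc x y, ‖-p ε s‖ ≤ M := by
    intro s hs
    have h1 : s ∈ Set.Ioc (0:ℝ) 1 := by
      rcases hs with ⟨h1, h2⟩
      constructor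
      · exact lt_of_le_of_lt (le_min hx.1 hy.1) h1
      · exact h2.trans (max_le hx.2 hy.2)
    rw [norm_neg]
    exact hbound ε hε s h1
  calc |∫ s in x..y, -p ε s| ≤ M * |y - x| :=
        intervalIntegral.norm_integral_le_of_norm_le_const hxy
    _ = M * |x - y| := by rw [abs_sub_comm]
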